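/- For n ≥ 1, the number of overpartitions π of n that contain at least one overlined part and for which the number of non-overlined parts of size strictly greater than the smallest overlined part is even, minus the number of such overpartitions for which that count is odd, equals p(n), the number of ordinary partitions of n. -/

import Mathlib

open scoped Classical

/-- An overpartition of `n`: a finite set of overlined part sizes (the first
occurrence of a size may be overlined, so overlined parts are distinct)
together with a multiset of non-overlined parts, all parts positive,
with total sum `n`. -/
structure Overpartition (n : ℕ) where
  overlined : Finset ℕ
  plain : Multiset ℕ
  over_pos : ∀ x ∈ overlined, 0 < x
  plain_pos : ∀ x ∈ plain, 0 < x
  sum_eq : (∑ x ∈ overlined, x) + plain.sum = n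
namespace Overpartition

variable {n : ℕ}

theorem ext' {π τ : Overpartition n} (h1 : π.overlined = τ.overlined) (h2 : π.plain = τ.plain) :
    π = τ := by
  cases π; cases τ; simp_all

/-- smallest overlined part (junk value 0 if none) -/
noncomputable def smin (π : Overpartition n) : ℕ :=
  if h : π.overlined.Nonempty then π.overlined.min' h else 0

theorem smin_mem {π : Overpartition n} (h : π.overlined.Nonempty) : π.smin ∈ π.overlined := by
  rw [smin, dif_pos h]; exact π.overlined.min'_mem h

theorem smin_le {π : Overpartition n} (h : π.overlined.Nonempty) {y : ℕ} (hy : y ∈ π.overlined) :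
    π.smin ≤ y := by
  rw [smin, dif_pos h]; exact π.overlined.min'_le y hy

theorem smin_pos {π : Overpartition n} (h : π.overlined.Nonempty) : 0 < π.smin :=
  π.over_pos _ (smin_mem h)

theorem smin_eq_of {π : Overpartition n} (h : π.overlined.Nonempty) {s : ℕ}
    (hs : s ∈ π.overlined) (hle : ∀ y ∈ π.overlined, s ≤ y) : π.smin = s :=
  le_antisymm (smin_le h hs) (by rw [smin, dif_pos h]; exact π.overlined.le_min' h s hle)

noncomputable def ell (π : Overpartition n) : ℕ :=
  Multiset.card (π.plain.filter (fun x => π.smin < x))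

noncomputable def big (π : Overpartition n) : Finset ℕ :=
  (π.overlined ∪ π.plain.toFinset).filter (fun x => π.smin < x)

theorem mem_big {π : Overpartition n} {x : ℕ} :
    x ∈ π.big ↔ (x ∈ π.overlined ∨ x ∈ π.plain) ∧ π.smin < x := by
  simp [big, Finset.mem_filter, Finset.mem_union, Multiset.mem_toFinset, and_comm]

noncomputable def mpart (π : Overpartition n) : ℕ :=
  if h : π.big.Nonempty then π.big.max' h else 0

theorem mpart_mem {π : Overpartition n} (h : π.big.Nonempty) : π.mpart ∈ π.big := by
  rw [mpart, dif_pos h]; exact π.big.max'_mem h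

theorem le_mpart {π : Overpartition n} (h : π.big.Nonempty) {y : ℕ} (hy : y ∈ π.big) :
    y ≤ π.mpart := by
  rw [mpart, dif_pos h]; exact π.big.le_max' y hy

theorem smin_lt_mpart {π : Overpartition n} (h : π.big.Nonempty) : π.smin < π.mpart :=
  (mem_big.mp (mpart_mem h)).2

/-- The sign-reversing involution. -/
noncomputable def invo (π : Overpartition n) : Overpartition n :=
  if h : π.overlined.Nonempty ∧ π.big.Nonempty then
    if hm : π.mpart ∈ π.overlined then
      { overlined := π.overlined.erase π.mpart
        plain := π.mpart ::ₘ π.plain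
        over_pos := fun x hx => π.over_pos x (Finset.mem_of_mem_erase hx)
        plain_pos := by
          intro x hx
          rcases Multiset.mem_cons.mp hx with rfl | hx
          · exact π.over_pos _ hm
          · exact π.plain_pos x hx
        sum_eq := by
          have h1 : ∑ x ∈ π.overlined.erase π.mpart, x + π.mpart = ∑ x ∈ π.overlined, x :=
            Finset.sum_erase_add _ _ hm
          have h2 := π.sum_eq
          rw [Multiset.sum_cons]
          omega }
    else
      { overlined := insert π.mpart π.overlined
        plain := π.plain.erase π.mpart
        over_pos := by
          intro x hx
          rcases Finset.mem_insert.mp hx with rfl | hx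
          · exact (smin_pos h.1).trans (smin_lt_mpart h.2)
          · exact π.over_pos x hx
        plain_pos := fun x hx => π.plain_pos x (Multiset.mem_of_mem_erase hx)
        sum_eq := by
          have hp : π.mpart ∈ π.plain := by
            rcases (mem_big.mp (mpart_mem h.2)).1 with h' | h'
            · exact absurd h' hm
            · exact h'
          have h1 : π.mpart + (π.plain.erase π.mpart).sum = π.plain.sum := by
            conv_rhs => rw [← Multiset.cons_erase hp]
            rw [Multiset.sum_cons]
          have h2 := π.sum_eq
          rw [Finset.sum_insert hm]
          omega }
  else π


section InvoLemmas

variable {π : Overpartition n}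

theorem invo_over1 (h : π.overlined.Nonempty ∧ π.big.Nonempty) (hm : π.mpart ∈ π.overlined) :
    (invo π).overlined = π.overlined.erase π.mpart := by rw [invo, dif_pos h, dif_pos hm]

theorem invo_plain1 (h : π.overlined.Nonempty ∧ π.big.Nonempty) (hm : π.mpart ∈ π.overlined) :
    (invo π).plain = π.mpart ::ₘ π.plain := by rw [invo, dif_pos h, dif_pos hm]

theorem invo_over2 (h : π.overlined.Nonempty ∧ π.big.Nonempty) (hm : π.mpart ∉ π.overlined) :
    (invo π).overlined = insert π.mpart π.overlined := by rw [invo, dif_pos h, dif_neg hm]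

theorem invo_plain2 (h : π.overlined.Nonempty ∧ π.big.Nonempty) (hm : π.mpart ∉ π.overlined) :
    (invo π).plain = π.plain.erase π.mpart := by rw [invo, dif_pos h, dif_neg hm]

theorem mpart_mem_plain (h : π.overlined.Nonempty ∧ π.big.Nonempty) (hm : π.mpart ∉ π.overlined) :
    π.mpart ∈ π.plain := by
  rcases (mem_big.mp (mpart_mem h.2)).1 with h' | h'
  · exact absurd h' hm
  · exact h'

theorem smin_ne_mpart (h : π.overlined.Nonempty ∧ π.big.Nonempty) : π.smin ≠ π.mpart :=
  ne_of_lt (smin_lt_mpart h.2)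

theorem invo_over_nonempty (h : π.overlined.Nonempty ∧ π.big.Nonempty) :
    (invo π).overlined.Nonempty := by
  by_cases hm : π.mpart ∈ π.overlined
  · rw [invo_over1 h hm]
    exact ⟨π.smin, Finset.mem_erase.mpr ⟨smin_ne_mpart h, smin_mem h.1⟩⟩
  · rw [invo_over2 h hm]
    exact Finset.insert_nonempty _ _

theorem invo_smin (h : π.overlined.Nonempty ∧ π.big.Nonempty) : (invo π).smin = π.smin := by
  by_cases hm : π.mpart ∈ π.overlined
  · refine smin_eq_of (invo_over_nonempty h) ?_ ?_
    · rw [invo_over1 h hm]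
      exact Finset.mem_erase.mpr ⟨smin_ne_mpart h, smin_mem h.1⟩
    · intro y hy
      rw [invo_over1 h hm] at hy
      exact smin_le h.1 (Finset.mem_of_mem_erase hy)
  · refine smin_eq_of (invo_over_nonempty h) ?_ ?_
    · rw [invo_over2 h hm]
      exact Finset.mem_insert_of_mem (smin_mem h.1)
    · intro y hy
      rw [invo_over2 h hm] at hy
      rcases Finset.mem_insert.mp hy with rfl | hy
      · exact le_of_lt (smin_lt_mpart h.2)
      · exact smin_le h.1 hy

theorem invo_union (h : π.overlined.Nonempty ∧ π.big.Nonempty) :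
    (invo π).overlined ∪ (invo π).plain.toFinset = π.overlined ∪ π.plain.toFinset := by
  by_cases hm : π.mpart ∈ π.overlined
  · rw [invo_over1 h hm, invo_plain1 h hm]
    ext a
    by_cases ha : a = π.mpart
    · subst ha
      simp [hm]
    · simp [Finset.mem_erase, ha, Multiset.mem_toFinset]
  · have hp := mpart_mem_plain h hm
    rw [invo_over2 h hm, invo_plain2 h hm]
    ext a
    by_cases ha : a = π.mpart
    · subst ha
      simp [Multiset.mem_toFinset, hp]
    · simp [Finset.mem_insert, ha, Multiset.mem_toFinset,
        Multiset.mem_erase_of_ne ha]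

theorem invo_big (h : π.overlined.Nonempty ∧ π.big.Nonempty) : (invo π).big = π.big := by
  rw [big, big, invo_union h, invo_smin h]

theorem invo_mpart (h : π.overlined.Nonempty ∧ π.big.Nonempty) : (invo π).mpart = π.mpart := by
  rw [mpart, mpart, invo_big h]

theorem invo_cond (h : π.overlined.Nonempty ∧ π.big.Nonempty) :
    (invo π).overlined.Nonempty ∧ (invo π).big.Nonempty :=
  ⟨invo_over_nonempty h, by rw [invo_big h]; exact h.2⟩

theorem invo_ell1 (h : π.overlined.Nonempty ∧ π.big.Nonempty) (hm : π.mpart ∈ π.overlined) :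
    (invo π).ell = π.ell + 1 := by
  rw [ell, ell, invo_plain1 h hm]
  simp only [invo_smin h]
  rw [Multiset.filter_cons_of_pos _ (smin_lt_mpart h.2), Multiset.card_cons]

theorem invo_ell2 (h : π.overlined.Nonempty ∧ π.big.Nonempty) (hm : π.mpart ∉ π.overlined) :
    π.ell = (invo π).ell + 1 := by
  have hp := mpart_mem_plain h hm
  rw [ell, ell, invo_plain2 h hm]
  simp only [invo_smin h]
  conv_lhs => rw [← Multiset.cons_erase hp]
  rw [Multiset.filter_cons_of_pos _ (smin_lt_mpart h.2), Multiset.card_cons]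

theorem invo_parity (h : π.overlined.Nonempty ∧ π.big.Nonempty) :
    Odd (invo π).ell ↔ Even π.ell := by
  by_cases hm : π.mpart ∈ π.overlined
  · rw [invo_ell1 h hm, Nat.odd_add_one, Nat.not_odd_iff_even]
  · rw [invo_ell2 h hm, Nat.even_add_one, Nat.not_even_iff_odd]

theorem invo_invo (h : π.overlined.Nonempty ∧ π.big.Nonempty) : invo (invo π) = π := by
  have h' := invo_cond h
  have hmp := invo_mpart h
  by_cases hm : π.mpart ∈ π.overlined
  · have hm' : (invo π).mpart ∉ (invo π).overlined := by
      rw [hmp, invo_over1 h hm]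
      exact Finset.notMem_erase _ _
    refine ext' ?_ ?_
    · rw [invo_over2 h' hm', hmp, invo_over1 h hm, Finset.insert_erase hm]
    · rw [invo_plain2 h' hm', hmp, invo_plain1 h hm, Multiset.erase_cons_head]
  · have hm' : (invo π).mpart ∈ (invo π).overlined := by
      rw [hmp, invo_over2 h hm]
      exact Finset.mem_insert_self _ _
    refine ext' ?_ ?_
    · rw [invo_over1 h' hm', hmp, invo_over2 h hm, Finset.erase_insert hm]
    · rw [invo_plain1 h' hm', hmp, invo_plain2 h hm,
        Multiset.cons_erase (mpart_mem_plain h hm)]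

theorem big_nonempty_of_ell (h : π.overlined.Nonempty) (he : π.ell ≠ 0) : π.big.Nonempty := by
  rw [ell] at he
  obtain ⟨x, hx⟩ := Multiset.card_pos_iff_exists_mem.mp (Nat.pos_of_ne_zero he)
  rw [Multiset.mem_filter] at hx
  exact ⟨x, mem_big.mpr ⟨Or.inr hx.1, hx.2⟩⟩

end InvoLemmas

section Fixed

variable {π : Overpartition n}

theorem plain_le_smin (hb : π.big = ∅) {x : ℕ} (hx : x ∈ π.plain) : x ≤ π.smin := by
  by_contra hlt
  have : x ∈ π.big := mem_big.mpr ⟨Or.inr hx, lt_of_not_ge hlt⟩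
  rw [hb] at this
  exact absurd this (Finset.notMem_empty x)

theorem over_eq_smin (h : π.overlined.Nonempty) (hb : π.big = ∅) : π.overlined = {π.smin} := by
  ext y
  simp only [Finset.mem_singleton]
  constructor
  · intro hy
    by_contra hne
    have hlt : π.smin < y := lt_of_le_of_ne (smin_le h hy) (Ne.symm hne)
    have : y ∈ π.big := mem_big.mpr ⟨Or.inl hy, hlt⟩
    rw [hb] at this
    exact absurd this (Finset.notMem_empty y)
  · rintro rfl
    exact smin_mem h

theorem ell_eq_zero (hb : π.big = ∅) : π.ell = 0 := by
  rw [ell, Multiset.card_eq_zero, Multiset.filter_eq_nil]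
  intro a ha hlt
  exact absurd hlt (not_lt.mpr (plain_le_smin hb ha))

/-- The bijection from fixed points to ordinary partitions. -/
noncomputable def toPart (π : Overpartition n) (h : π.overlined.Nonempty) (hb : π.big = ∅) :
    Nat.Partition n where
  parts := π.smin ::ₘ π.plain
  parts_pos := by
    intro i hi
    rcases Multiset.mem_cons.mp hi with rfl | hi
    · exact smin_pos h
    · exact π.plain_pos i hi
  parts_sum := by
    have h1 := π.sum_eq
    rw [over_eq_smin h hb, Finset.sum_singleton] at h1
    rw [Multiset.sum_cons]
    exact h1

end Fixed

section Fin

theorem card_plain_le (π : Overpartition n) : Multiset.card π.plain ≤ n := by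
  have h1 : Multiset.card π.plain • 1 ≤ π.plain.sum :=
    Multiset.card_nsmul_le_sum (fun x hx => π.plain_pos x hx)
  have h2 := π.sum_eq
  simp only [smul_eq_mul, mul_one] at h1
  omega

theorem mem_bound (π : Overpartition n) :
    (π.overlined, π.plain) ∈ (Finset.range (n + 1)).powerset ×ˢ
      (((n + 1) • (Finset.range (n + 1)).val).powerset.toFinset) := by
  rw [Finset.mem_product]
  constructor
  · rw [Finset.mem_powerset]
    intro x hx
    rw [Finset.mem_range]
    have h1 : x ≤ ∑ y ∈ π.overlined, y :=
      Finset.single_le_sum (f := fun y => y) (fun i _ => Nat.zero_le i) hx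
    have h2 := π.sum_eq
    omega
  · rw [Multiset.mem_toFinset, Multiset.mem_powerset, Multiset.le_iff_count]
    intro a
    by_cases ha : a ∈ π.plain
    · have hle : Multiset.count a π.plain ≤ n :=
        le_trans (Multiset.count_le_card a _) (card_plain_le π)
      have han : a ≤ n := by
        have h1 : a ≤ π.plain.sum :=
          Multiset.single_le_sum (fun x _ => Nat.zero_le x) a ha
        have h2 := π.sum_eq
        omega
      rw [Multiset.count_nsmul,
        Multiset.count_eq_of_nodup (Finset.range (n + 1)).nodup]
      simp only [Finset.mem_val, Finset.mem_range]
      rw [if_pos (by omega)]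
      omega
    · rw [Multiset.count_eq_zero_of_notMem ha]
      exact Nat.zero_le _

instance : Finite (Overpartition n) := by
  refine Finite.of_injective
    (fun π : Overpartition n =>
      (⟨(π.overlined, π.plain), mem_bound π⟩ :
        {x // x ∈ (Finset.range (n + 1)).powerset ×ˢ
          (((n + 1) • (Finset.range (n + 1)).val).powerset.toFinset)})) ?_
  intro a b h
  simp only [Subtype.mk.injEq, Prod.mk.injEq] at h
  exact ext' h.1 h.2

noncomputable instance : Fintype (Overpartition n) := Fintype.ofFinite _

end Fin

theorem card_fixed (hn : 1 ≤ n) :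
    (Finset.univ.filter (fun π : Overpartition n => π.overlined.Nonempty ∧ π.big = ∅)).card
      = Fintype.card (Nat.Partition n) := by
  rw [← Finset.card_univ]
  refine Finset.card_bij
    (fun π hπ => toPart π (Finset.mem_filter.mp hπ).2.1 (Finset.mem_filter.mp hπ).2.2)
    (fun _ _ => Finset.mem_univ _) ?_ ?_
  · intro π₁ h₁ π₂ h₂ heq
    obtain ⟨-, hov₁, hb₁⟩ := Finset.mem_filter.mp h₁
    obtain ⟨-, hov₂, hb₂⟩ := Finset.mem_filter.mp h₂
    have hparts : π₁.smin ::ₘ π₁.plain = π₂.smin ::ₘ π₂.plain :=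
      congrArg Nat.Partition.parts heq
    have h12 : π₂.smin ≤ π₁.smin := by
      have hmem : π₂.smin ∈ π₁.smin ::ₘ π₁.plain := by
        rw [hparts]; exact Multiset.mem_cons_self _ _
      rcases Multiset.mem_cons.mp hmem with h' | h'
      · omega
      · exact plain_le_smin hb₁ h'
    have h21 : π₁.smin ≤ π₂.smin := by
      have hmem : π₁.smin ∈ π₂.smin ::ₘ π₂.plain := by
        rw [← hparts]; exact Multiset.mem_cons_self _ _
      rcases Multiset.mem_cons.mp hmem with h' | h'
      · omega
      · exact plain_le_smin hb₂ h'
    have hs : π₁.smin = π₂.smin := le_antisymm h21 h12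
    rw [hs] at hparts
    have hplain : π₁.plain = π₂.plain := (Multiset.cons_inj_right _).mp hparts
    refine ext' ?_ hplain
    rw [over_eq_smin hov₁ hb₁, over_eq_smin hov₂ hb₂, hs]
  · intro p _
    have hne : p.parts ≠ 0 := by
      intro h0
      have hps := p.parts_sum
      rw [h0, Multiset.sum_zero] at hps
      omega
    have htf : p.parts.toFinset.Nonempty := by
      obtain ⟨x, hx⟩ := Multiset.exists_mem_of_ne_zero hne
      exact ⟨x, Multiset.mem_toFinset.mpr hx⟩
    set m := p.parts.toFinset.max' htf with hm
    have hmm : m ∈ p.parts := Multiset.mem_toFinset.mp (p.parts.toFinset.max'_mem htf)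
    have hmax : ∀ x ∈ p.parts, x ≤ m := fun x hx =>
      p.parts.toFinset.le_max' x (Multiset.mem_toFinset.mpr hx)
    let π₀ : Overpartition n :=
      { overlined := {m}
        plain := p.parts.erase m
        over_pos := by
          intro x hx
          rw [Finset.mem_singleton] at hx
          subst hx
          exact p.parts_pos hmm
        plain_pos := fun x hx => p.parts_pos (Multiset.mem_of_mem_erase hx)
        sum_eq := by
          rw [Finset.sum_singleton]
          have h1 : m ::ₘ p.parts.erase m = p.parts := Multiset.cons_erase hmm
          have h2 : (m ::ₘ p.parts.erase m).sum = m + (p.parts.erase m).sum :=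
            Multiset.sum_cons _ _
          have h3 := p.parts_sum
          rw [h1] at h2
          omega }
    have hov : π₀.overlined.Nonempty := ⟨m, Finset.mem_singleton_self m⟩
    have hsm : π₀.smin = m := by
      refine smin_eq_of hov (Finset.mem_singleton_self m) ?_
      intro y hy
      rw [Finset.mem_singleton] at hy
      omega
    have hb : π₀.big = ∅ := by
      rw [Finset.eq_empty_iff_forall_notMem]
      intro x hx
      obtain ⟨hx1, hx2⟩ := mem_big.mp hx
      rw [hsm] at hx2
      rcases hx1 with h' | h'
      · rw [Finset.mem_singleton] at h'
        omega
      · exact absurd hx2 (not_lt.mpr (hmax x (Multiset.mem_of_mem_erase h')))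
    refine ⟨π₀, Finset.mem_filter.mpr ⟨Finset.mem_univ _, hov, hb⟩, ?_⟩
    apply Nat.Partition.ext
    show π₀.smin ::ₘ π₀.plain = p.parts
    rw [hsm]
    exact Multiset.cons_erase hmm

end Overpartition

open Overpartition

theorem stmt_6 (n : ℕ) (hn : 1 ≤ n) :
    (Nat.card {π : Overpartition n // π.overlined.Nonempty ∧
        Even (Multiset.card (π.plain.filter (fun x => ∃ y ∈ π.overlined, y < x)))} : ℤ) -
      Nat.card {π : Overpartition n // π.overlined.Nonempty ∧
        Odd (Multiset.card (π.plain.filter (fun x => ∃ y ∈ π.overlined, y < x)))} =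
    Nat.card (Nat.Partition n) := by
  classical
  have key : ∀ π : Overpartition n, π.overlined.Nonempty →
      Multiset.card (π.plain.filter (fun x => ∃ y ∈ π.overlined, y < x)) = π.ell := by
    intro π h
    rw [ell]
    congr 1
    refine Multiset.filter_congr ?_
    intro x _
    constructor
    · rintro ⟨y, hy, hyx⟩
      exact lt_of_le_of_lt (smin_le h hy) hyx
    · intro hx
      exact ⟨π.smin, smin_mem h, hx⟩
  rw [Nat.card_eq_fintype_card, Nat.card_eq_fintype_card, Nat.card_eq_fintype_card,
    Fintype.card_subtype, Fintype.card_subtype]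
  have hA : (Finset.univ.filter (fun π : Overpartition n => π.overlined.Nonempty ∧
        Even (Multiset.card (π.plain.filter (fun x => ∃ y ∈ π.overlined, y < x))))) =
      Finset.univ.filter (fun π : Overpartition n => π.overlined.Nonempty ∧ Even π.ell) :=
    Finset.filter_congr (fun π _ => and_congr_right (fun h1 => by rw [key π h1]))
  have hB : (Finset.univ.filter (fun π : Overpartition n => π.overlined.Nonempty ∧
        Odd (Multiset.card (π.plain.filter (fun x => ∃ y ∈ π.overlined, y < x))))) =
      Finset.univ.filter (fun π : Overpartition n => π.overlined.Nonempty ∧ Odd π.ell) :=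
    Finset.filter_congr (fun π _ => and_congr_right (fun h1 => by rw [key π h1]))
  rw [hA, hB]
  set A := Finset.univ.filter (fun π : Overpartition n => π.overlined.Nonempty ∧ Even π.ell)
    with hAdef
  set B := Finset.univ.filter (fun π : Overpartition n => π.overlined.Nonempty ∧ Odd π.ell)
    with hBdef
  set F := Finset.univ.filter (fun π : Overpartition n => π.overlined.Nonempty ∧ π.big = ∅)
    with hFdef
  have hFA : F ⊆ A := by
    intro π hπ
    obtain ⟨-, hov, hb⟩ := Finset.mem_filter.mp hπ
    exact Finset.mem_filter.mpr ⟨Finset.mem_univ _, hov, by rw [ell_eq_zero hb]; exact Even.zero⟩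
  have h1 : (A \ F).card + F.card = A.card := Finset.card_sdiff_add_card_eq_card hFA
  have hcond : ∀ π ∈ A \ F, π.overlined.Nonempty ∧ π.big.Nonempty := by
    intro π hπ
    obtain ⟨hA', hnF⟩ := Finset.mem_sdiff.mp hπ
    obtain ⟨-, hov, -⟩ := Finset.mem_filter.mp hA'
    refine ⟨hov, ?_⟩
    rw [Finset.nonempty_iff_ne_empty]
    intro hb
    exact hnF (Finset.mem_filter.mpr ⟨Finset.mem_univ _, hov, hb⟩)
  have h2 : (A \ F).card = B.card := by
    refine Finset.card_bij (fun π _ => invo π) ?_ ?_ ?_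
    · intro π hπ
      have h := hcond π hπ
      have heven : Even π.ell := (Finset.mem_filter.mp (Finset.mem_sdiff.mp hπ).1).2.2
      exact Finset.mem_filter.mpr
        ⟨Finset.mem_univ _, invo_over_nonempty h, (invo_parity h).mpr heven⟩
    · intro π₁ hπ₁ π₂ hπ₂ heq
      have heq' : invo π₁ = invo π₂ := heq
      rw [← invo_invo (hcond π₁ hπ₁), heq', invo_invo (hcond π₂ hπ₂)]
    · intro τ hτ
      obtain ⟨-, hov, hodd⟩ := Finset.mem_filter.mp hτ
      have hb : τ.big.Nonempty := by
        refine big_nonempty_of_ell hov ?_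
        intro h0
        rw [h0] at hodd
        simp [Nat.odd_iff] at hodd
      have h' : τ.overlined.Nonempty ∧ τ.big.Nonempty := ⟨hov, hb⟩
      have heven : Even (invo τ).ell := by
        have hp := invo_parity (invo_cond h')
        rw [invo_invo h'] at hp
        exact hp.mp hodd
      refine ⟨invo τ, Finset.mem_sdiff.mpr ⟨?_, ?_⟩, invo_invo h'⟩
      · exact Finset.mem_filter.mpr ⟨Finset.mem_univ _, invo_over_nonempty h', heven⟩
      · intro hmem
        have hbe : (invo τ).big = ∅ := (Finset.mem_filter.mp hmem).2.2
        rw [invo_big h'] at hbe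
        exact hb.ne_empty hbe
  have h3 : F.card = Fintype.card (Nat.Partition n) := card_fixed hn
  omega
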